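/- Let λ_R, λ̂_R : ℝ → ℝ be continuous, set Γ(t) = exp(−∫_0^t λ_R(u)du) and Γ̂(t) = exp(−∫_0^t λ̂_R(u)du); let f : ℝ → ℝ be nonnegative, integrable, and vanishing on (−∞,0); let ĥ : ℝ → ℝ be bounded and measurable; and assume u ↦ (Γ(u)/Γ̂(u))·|λ_R(u) − λ̂_R(u)|·(∫_u^∞ f(t)dt) is integrable on (0, ∞). Then: ∫_0^∞ (Γ(t)/Γ̂(t) − 1) · ĥ(t) · f(t) dt = −∫_0^∞ (Γ(u)/Γ̂(u)) · (λ_R(u) − λ̂_R(u)) · (∫_u^∞ ĥ(t) f(t) dt) du. -/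

import Mathlib

open MeasureTheory

/-- With `Γ(t) = exp(−∫_0^t λ_R)` and `Γ̂(t) = exp(−∫_0^t λ̂_R)` for continuous
`λ_R, λ̂_R`, `f` nonnegative, integrable, vanishing on `(−∞,0)`, `ĥ` bounded measurable, and
`u ↦ (Γ(u)/Γ̂(u))·|λ_R(u) − λ̂_R(u)|·(∫_u^∞ f)` integrable on `(0,∞)`:
`∫_0^∞ (Γ(t)/Γ̂(t) − 1)·ĥ(t)·f(t) dt
  = −∫_0^∞ (Γ(u)/Γ̂(u))·(λ_R(u) − λ̂_R(u))·(∫_u^∞ ĥ(t) f(t) dt) du`. -/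
theorem stmt_9
    (lamR lamRh : ℝ → ℝ) (hlamR : Continuous lamR) (hlamRh : Continuous lamRh)
    (Γ Γh : ℝ → ℝ)
    (hΓ : ∀ t, Γ t = Real.exp (-∫ u in (0 : ℝ)..t, lamR u))
    (hΓh : ∀ t, Γh t = Real.exp (-∫ u in (0 : ℝ)..t, lamRh u))
    (f : ℝ → ℝ) (hf_nonneg : ∀ x, 0 ≤ f x) (hf_int : Integrable f)
    (hf_zero : ∀ x < (0 : ℝ), f x = 0)
    (hhat : ℝ → ℝ) (hhat_meas : Measurable hhat) (hhat_bdd : ∃ M, ∀ x, |hhat x| ≤ M)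
    (h_int : IntegrableOn
      (fun u => Γ u / Γh u * |lamR u - lamRh u| * ∫ t in Set.Ioi u, f t)
      (Set.Ioi (0 : ℝ))) :
    (∫ t in Set.Ioi (0 : ℝ), (Γ t / Γh t - 1) * hhat t * f t)
      = -∫ u in Set.Ioi (0 : ℝ),
          Γ u / Γh u * (lamR u - lamRh u) * ∫ t in Set.Ioi u, hhat t * f t := by
  obtain ⟨M, hM⟩ := hhat_bdd
  set g : ℝ → ℝ := fun u => lamRh u - lamR u with hg_def
  have hg_cont : Continuous g := hlamRh.sub hlamR
  set φ : ℝ → ℝ := fun t => Real.exp (∫ u in (0:ℝ)..t, g u) with hφ_def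
  -- Γ/Γ̂ = φ
  have hφ_eq : ∀ t, Γ t / Γh t = φ t := by
    intro t
    rw [hΓ, hΓh, ← Real.exp_sub, hφ_def]
    congr 1
    rw [intervalIntegral.integral_sub (hlamRh.intervalIntegrable _ _)
      (hlamR.intervalIntegrable _ _)]
    ring
  have hφ_pos : ∀ t, 0 < φ t := fun t => Real.exp_pos _
  -- derivative of φ
  have hφ_deriv : ∀ t, HasDerivAt φ (g t * φ t) t := by
    intro t
    have hI : HasDerivAt (fun s => ∫ u in (0:ℝ)..s, g u) (g t) t :=
      intervalIntegral.integral_hasDerivAt_right (hg_cont.intervalIntegrable _ _)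
        (hg_cont.stronglyMeasurable.stronglyMeasurableAtFilter) hg_cont.continuousAt
    have := hI.exp
    simpa [mul_comm] using this
  have hφ_cont : Continuous φ := by
    rw [continuous_iff_continuousAt]
    exact fun t => (hφ_deriv t).differentiableAt.continuousAt
  set ψ : ℝ → ℝ := fun u => g u * φ u with hψ_def
  have hψ_cont : Continuous ψ := hg_cont.mul hφ_cont
  have key : ∀ t, φ t - 1 = ∫ u in (0:ℝ)..t, ψ u := by
    intro t
    have h := intervalIntegral.integral_eq_sub_of_hasDerivAt
      (f := φ) (f' := ψ) (a := 0) (b := t)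
      (fun u _ => hφ_deriv u) (hψ_cont.intervalIntegrable 0 t)
    have hφ0 : φ 0 = 1 := by simp [hφ_def]
    rw [h, hφ0]
  -- the kernel
  set F : ℝ → ℝ → ℝ := fun t u => (Set.Ioc (0:ℝ) t).indicator ψ u * (hhat t * f t)
    with hF_def
  have hhf_int : Integrable (fun t => hhat t * f t) := by
    refine hf_int.bdd_mul (c := M) hhat_meas.aestronglyMeasurable (Filter.Eventually.of_forall fun x => ?_)
    simpa using hM x
  -- AE strong measurability of uncurry F
  have hF_meas : AEStronglyMeasurable (Function.uncurry F) (volume.prod volume) := by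
    have h1 : AEStronglyMeasurable (fun p : ℝ × ℝ => hhat p.1 * f p.1)
        (volume.prod volume) :=
      AEStronglyMeasurable.comp_fst (hhat_meas.aestronglyMeasurable.mul hf_int.1)
    have hset : MeasurableSet {p : ℝ × ℝ | 0 < p.2 ∧ p.2 ≤ p.1} :=
      (measurableSet_lt measurable_const measurable_snd).inter
        (measurableSet_le measurable_snd measurable_fst)
    have h2 : AEStronglyMeasurable
        (fun p : ℝ × ℝ => (Set.Ioc (0:ℝ) p.1).indicator ψ p.2) (volume.prod volume) := by
      have : (fun p : ℝ × ℝ => (Set.Ioc (0:ℝ) p.1).indicator ψ p.2)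
          = Set.indicator {p : ℝ × ℝ | 0 < p.2 ∧ p.2 ≤ p.1} (fun p => ψ p.2) := by
        funext p
        by_cases h : p ∈ {p : ℝ × ℝ | 0 < p.2 ∧ p.2 ≤ p.1}
        · rw [Set.indicator_of_mem h, Set.indicator_of_mem]
          exact ⟨h.1, h.2⟩
        · rw [Set.indicator_of_notMem h, Set.indicator_of_notMem]
          intro hc; exact h ⟨hc.1, hc.2⟩
      rw [this]
      exact ((hψ_cont.measurable.comp measurable_snd).aestronglyMeasurable).indicator hset
    exact h2.mul h1
  -- pointwise form of F in u-slices
  have hF_pt : ∀ u t : ℝ, F t u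
      = if 0 < u then ψ u * (Set.Ici u).indicator (fun t => hhat t * f t) t else 0 := by
    intro u t
    by_cases hu : 0 < u
    · by_cases hut : u ≤ t
      · simp [hF_def, Set.indicator_of_mem (Set.mem_Ioc.2 ⟨hu, hut⟩),
          Set.indicator_of_mem (Set.mem_Ici.2 hut), hu]
      · simp [hF_def, Set.indicator_of_notMem (fun hc : u ∈ Set.Ioc 0 t => hut hc.2),
          Set.indicator_of_notMem (fun hc : t ∈ Set.Ici u => hut hc), hu]
    · simp [hF_def, Set.indicator_of_notMem (fun hc : u ∈ Set.Ioc 0 t => hu hc.1), hu]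
  -- dominating function
  set D : ℝ → ℝ := (Set.Ioi (0:ℝ)).indicator
    (fun u => |ψ u| * (M * ∫ t in Set.Ioi u, f t)) with hD_def
  have hψ_abs : ∀ u, Γ u / Γh u * |lamR u - lamRh u| = |ψ u| := by
    intro u
    rw [hφ_eq, hψ_def, abs_mul, abs_of_pos (hφ_pos u)]
    rw [show |lamR u - lamRh u| = |g u| by rw [hg_def]; exact (abs_sub_comm _ _)]
    ring
  have hD_int : Integrable D := by
    have hbase : Integrable ((Set.Ioi (0:ℝ)).indicator
        (fun u => Γ u / Γh u * |lamR u - lamRh u| * ∫ t in Set.Ioi u, f t)) :=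
      h_int.integrable_indicator measurableSet_Ioi
    have := hbase.mul_const M
    refine this.congr (Filter.EventuallyEq.of_eq ?_)
    funext u
    by_cases hu : u ∈ Set.Ioi (0:ℝ)
    · simp only [Set.indicator_of_mem hu, hD_def, ← hψ_abs u]
      ring
    · simp [hD_def, Set.indicator_of_notMem hu]
  -- integral of slices
  have hslice_int : ∀ u : ℝ, Integrable (fun t => F t u) := by
    intro u
    simp only [hF_pt]
    by_cases hu : 0 < u
    · simp only [if_pos hu]
      exact ((hhf_int.indicator measurableSet_Ici).const_mul _)
    · simp only [if_neg hu]
      exact integrable_zero _ _ _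
  have hslice_norm : ∀ u : ℝ, (∫ t, ‖F t u‖) ≤ D u ∧ 0 ≤ ∫ t, ‖F t u‖ := by
    intro u
    constructor
    · simp only [hF_pt]
      by_cases hu : 0 < u
      · simp only [if_pos hu]
        have heq : (fun t => ‖ψ u * (Set.Ici u).indicator (fun t => hhat t * f t) t‖)
            = fun t => |ψ u| * (Set.Ici u).indicator (fun t => |hhat t * f t|) t := by
          funext t
          rw [Real.norm_eq_abs, abs_mul]
          congr 1
          exact (Set.indicator_comp_of_zero (g := fun x : ℝ => |x|) (by simp)).symm ▸ rfl
        rw [heq]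
        rw [integral_const_mul, integral_indicator measurableSet_Ici]
        rw [hD_def, Set.indicator_of_mem (Set.mem_Ioi.2 hu)]
        refine mul_le_mul_of_nonneg_left ?_ (abs_nonneg _)
        have hb : (∫ t in Set.Ici u, |hhat t * f t|) ≤ ∫ t in Set.Ici u, M * f t := by
          refine setIntegral_mono_on (hhf_int.abs.integrableOn)
            ((hf_int.const_mul M).integrableOn) measurableSet_Ici ?_
          intro t _
          rw [abs_mul, abs_of_nonneg (hf_nonneg t)]
          exact mul_le_mul_of_nonneg_right (hM t) (hf_nonneg t)
        calc (∫ t in Set.Ici u, |hhat t * f t|) ≤ ∫ t in Set.Ici u, M * f t := hb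
          _ = M * ∫ t in Set.Ici u, f t := integral_const_mul M _
          _ = M * ∫ t in Set.Ioi u, f t := by rw [integral_Ici_eq_integral_Ioi]
      · simp only [if_neg hu]
        simp [hD_def, Set.indicator_of_notMem (fun hc : u ∈ Set.Ioi 0 => hu hc)]
    · exact integral_nonneg fun t => norm_nonneg _
  -- integrability of uncurry F
  have hF_int : Integrable (Function.uncurry F) (volume.prod volume) := by
    rw [integrable_prod_iff' hF_meas]
    constructor
    · exact Filter.Eventually.of_forall fun u => hslice_int u
    · refine hD_int.mono' ?_ (Filter.Eventually.of_forall fun u => ?_)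
      · have : AEStronglyMeasurable (fun p : ℝ × ℝ => ‖Function.uncurry F p.swap‖)
            (volume.prod volume) := hF_meas.norm.prod_swap
        exact this.integral_prod_right'
      · show ‖∫ t, ‖F t u‖‖ ≤ D u
        rw [Real.norm_eq_abs, abs_of_nonneg (hslice_norm u).2]
        exact (hslice_norm u).1
  -- Fubini
  have hswap : (∫ t, ∫ u, F t u) = ∫ u, ∫ t, F t u := integral_integral_swap hF_int
  -- LHS computation
  have hLHS : (∫ t in Set.Ioi (0 : ℝ), (Γ t / Γh t - 1) * hhat t * f t)
      = ∫ t, ∫ u, F t u := by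
    rw [← setIntegral_eq_integral_of_forall_compl_eq_zero
      (s := Set.Ioi (0:ℝ)) (f := fun t => ∫ u, F t u) ?_]
    · refine setIntegral_congr_fun measurableSet_Ioi fun t ht => ?_
      have : (∫ u, F t u) = (∫ u in Set.Ioc (0:ℝ) t, ψ u) * (hhat t * f t) := by
        rw [hF_def]
        simp only
        rw [integral_mul_const, integral_indicator measurableSet_Ioc]
      rw [this, hφ_eq, key t, intervalIntegral.integral_of_le (le_of_lt ht)]
      ring
    · intro t ht
      have hts : t ≤ 0 := le_of_not_gt ht
      have : ∀ u, F t u = 0 := by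
        intro u
        rw [hF_def]
        simp only
        rw [Set.indicator_of_notMem, zero_mul]
        intro hc
        exact absurd (lt_of_lt_of_le hc.1 (le_trans hc.2 hts)) (lt_irrefl 0)
      simp [this]
  -- RHS computation
  have hRHS : (∫ u, ∫ t, F t u)
      = ∫ u in Set.Ioi (0:ℝ), ψ u * ∫ t in Set.Ioi u, hhat t * f t := by
    rw [← setIntegral_eq_integral_of_forall_compl_eq_zero
      (s := Set.Ioi (0:ℝ)) (f := fun u => ∫ t, F t u) ?_]
    · refine setIntegral_congr_fun measurableSet_Ioi fun u hu => ?_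
      simp only [hF_pt, if_pos (Set.mem_Ioi.1 hu)]
      rw [integral_const_mul, integral_indicator measurableSet_Ici,
        integral_Ici_eq_integral_Ioi]
    · intro u hu
      simp [hF_pt, if_neg (fun hc : (0:ℝ) < u => hu hc)]
  rw [hLHS, hswap, hRHS, ← integral_neg]
  refine setIntegral_congr_fun measurableSet_Ioi fun u _ => ?_
  rw [hφ_eq, hψ_def, hg_def]
  ring
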